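/- Let F = GF(2^n) with n odd and n not divisible by 3, and let f(x) = Inv(x) for x ∉ {0,1}, f(0) = 1, f(1) = 0, where Inv(x) = x^(2^n-2). Then the second-order zero differential uniformity of f equals 4; that is, max over a, b ∈ F with ab(a+b) ≠ 0 of #{x : f(x+a+b)+f(x+a)+f(x+b)+f(x)=0} equals 4. -/

import Mathlib

private lemma stmt_10_aux3 {k : ℕ} (h : 3 ∣ 2 ^ k - 1) : 2 ∣ k := by
  have h1 : (1:ℕ) ≤ 2 ^ k := Nat.one_le_two_pow
  have hz : ((2 ^ k - 1 : ℕ) : ZMod 3) = 0 := (ZMod.natCast_eq_zero_iff _ 3).mpr h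
  rw [Nat.cast_sub h1] at hz
  push_cast at hz
  have hzm : ((2 : ZMod 3)) ^ k = 1 := sub_eq_zero.mp hz
  have hdn := orderOf_dvd_of_pow_eq_one hzm
  have hzo : orderOf (2 : ZMod 3) = 2 := orderOf_eq_prime (by decide) (by decide)
  rwa [hzo] at hdn

private lemma stmt_10_aux7 {k : ℕ} (h : 7 ∣ 2 ^ k - 1) : 3 ∣ k := by
  have h1 : (1:ℕ) ≤ 2 ^ k := Nat.one_le_two_pow
  have hz : ((2 ^ k - 1 : ℕ) : ZMod 7) = 0 := (ZMod.natCast_eq_zero_iff _ 7).mpr h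
  rw [Nat.cast_sub h1] at hz
  push_cast at hz
  have hzm : ((2 : ZMod 7)) ^ k = 1 := sub_eq_zero.mp hz
  have hdn := orderOf_dvd_of_pow_eq_one hzm
  have hzo : orderOf (2 : ZMod 7) = 3 := orderOf_eq_prime (by decide) (by decide)
  rwa [hzo] at hdn


theorem stmt_10 {F : Type*} [Field F] [Fintype F] [DecidableEq F] {n : ℕ}
    (hn : 1 < n) (hodd : Odd n) (h3 : ¬ (3 ∣ n)) (hF : Fintype.card F = 2 ^ n)
    (f : F → F)
    (hf : f = fun x => if x = 0 then 1 else if x = 1 then 0 else x ^ (2 ^ n - 2)) :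
    (∀ a b : F, a * b * (a + b) ≠ 0 →
      (Finset.univ.filter fun x : F =>
        f (x + a + b) + f (x + a) + f (x + b) + f x = 0).card ≤ 4) ∧
    (∃ a b : F, a * b * (a + b) ≠ 0 ∧
      (Finset.univ.filter fun x : F =>
        f (x + a + b) + f (x + a) + f (x + b) + f x = 0).card = 4) := by
  haveI : Fact (Nat.Prime 3) := ⟨by norm_num⟩
  haveI : Fact (Nat.Prime 7) := ⟨by norm_num⟩
  have hn0 : n ≠ 0 := by omega
  have h4n : (4:ℕ) ≤ 2 ^ n := by
    calc (4:ℕ) = 2^2 := by norm_num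
    _ ≤ 2^n := Nat.pow_le_pow_right (by norm_num) hn
  have hcard4 : 4 ≤ Fintype.card F := by rw [hF]; exact h4n
  have h2 : (2:F) = 0 := by
    have h0 : ((Fintype.card F : ℕ) : F) = 0 := FiniteField.cast_card_eq_zero F
    rw [hF] at h0
    push_cast at h0
    exact pow_eq_zero_iff hn0 |>.mp h0
  have hf' : ∀ y : F, y ≠ 0 → y ≠ 1 → f y = y⁻¹ := by
    intro y hy0 hy1
    rw [hf]; simp only [if_neg hy0, if_neg hy1]
    have h1 : y ^ (2^n - 1) = 1 := by rw [← hF]; exact FiniteField.pow_card_sub_one_eq_one y hy0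
    have e : 2^n - 1 = (2^n - 2) + 1 := by omega
    rw [e, pow_succ] at h1
    field_simp
    exact h1
  have hf0 : f 0 = 1 := by rw [hf]; simp
  have hf1 : f 1 = 0 := by rw [hf]; simp [one_ne_zero]
  -- x^2+x+1 has no root
  have hroot3 : ∀ w : F, w^2 + w + 1 ≠ 0 := by
    intro w hw
    have hw0 : w ≠ 0 := by rintro rfl; simp at hw
    have hw1 : w ≠ 1 := by
      rintro rfl
      exact one_ne_zero (show (1:F) = 0 by linear_combination hw - h2)
    have hcube : w ^ 3 = 1 := by linear_combination (w - 1) * hw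
    have hord : orderOf w = 3 := orderOf_eq_prime hcube hw1
    have hdvd : orderOf w ∣ 2^n - 1 := by
      apply orderOf_dvd_of_pow_eq_one
      rw [← hF]; exact FiniteField.pow_card_sub_one_eq_one w hw0
    rw [hord] at hdvd
    exact (Nat.not_even_iff_odd.mpr hodd) (even_iff_two_dvd.mpr (stmt_10_aux3 hdvd))
  -- x^3+x+1 has no root
  have hroot7 : ∀ s : F, s^3 + s + 1 ≠ 0 := by
    intro s hs
    have hs0 : s ≠ 0 := by rintro rfl; simp at hs
    have hs1 : s ≠ 1 := by
      rintro rfl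
      exact one_ne_zero (show (1:F) = 0 by linear_combination hs - h2)
    have h7 : s ^ 7 = 1 := by linear_combination (s^4 - s^2 - s + 1) * hs + (s^2 - 1) * h2
    have hord : orderOf s = 7 := orderOf_eq_prime h7 hs1
    have hdvd : orderOf s ∣ 2^n - 1 := by
      apply orderOf_dvd_of_pow_eq_one
      rw [← hF]; exact FiniteField.pow_card_sub_one_eq_one s hs0
    rw [hord] at hdvd
    exact h3 (stmt_10_aux7 hdvd)
  -- char-2 conversions
  have hcv : ∀ u v : F, u + v = 0 → u = v := fun u v h => by linear_combination h - v * h2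
  have hcv1 : ∀ u v : F, u + v = 1 → u = 1 + v := fun u v h => by linear_combination h - v * h2
  -- shift lemmas
  have hstepa : ∀ a b x : F, f (x + a + b) + f (x + a) + f (x + b) + f x = 0 →
      f ((x+a) + a + b) + f ((x+a) + a) + f ((x+a) + b) + f (x+a) = 0 := by
    intro a b x hx
    have e1 : x + a + a + b = x + b := by linear_combination a * h2
    have e2 : x + a + a = x := by linear_combination a * h2
    rw [e1, e2]
    linear_combination hx
  have hstepb : ∀ a b x : F, f (x + a + b) + f (x + a) + f (x + b) + f x = 0 →
      f ((x+b) + a + b) + f ((x+b) + a) + f ((x+b) + b) + f (x+b) = 0 := by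
    intro a b x hx
    have e1 : x + b + a + b = x + a := by linear_combination b * h2
    have e2 : x + b + b = x := by linear_combination b * h2
    rw [e1, e2]
    have e3 : x + b + a = x + a + b := by ring
    rw [e3]
    linear_combination hx
  -- no solutions outside the 8 special points
  have key : ∀ a b x : F, x ≠ 0 → x ≠ 1 → x+a ≠ 0 → x+a ≠ 1 → x+b ≠ 0 → x+b ≠ 1 →
      x+a+b ≠ 0 → x+a+b ≠ 1 →
      f (x + a + b) + f (x + a) + f (x + b) + f x = 0 → a * b * (a + b) = 0 := by
    intro a b x hx0 hx1 hxa0 hxa1 hxb0 hxb1 hxab0 hxab1 heq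
    rw [hf' _ hxab0 hxab1, hf' _ hxa0 hxa1, hf' _ hxb0 hxb1, hf' _ hx0 hx1] at heq
    field_simp at heq
    linear_combination heq - (3*a*b*x + 3*a*x^2 + a^2*x + 3*b*x^2 + b^2*x + 2*x^3) * h2
  -- both orbits solving leads to contradiction
  have hcontra : ∀ a b : F, a ≠ 0 → a ≠ 1 → b ≠ 0 → b ≠ 1 → a + b ≠ 0 → a + b ≠ 1 →
      f (0+a+b) + f (0+a) + f (0+b) + f 0 = 0 →
      f (1+a+b) + f (1+a) + f (1+b) + f 1 = 0 → False := by
    intro a b ha0 ha1 hb0 hb1 hs0 hs1 heq0 heq1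
    have h1a0 : (1:F) + a ≠ 0 := fun h => ha1 (hcv _ _ h).symm
    have h1a1 : (1:F) + a ≠ 1 := fun h => ha0 (by linear_combination h)
    have h1b0 : (1:F) + b ≠ 0 := fun h => hb1 (hcv _ _ h).symm
    have h1b1 : (1:F) + b ≠ 1 := fun h => hb0 (by linear_combination h)
    have h1ab0 : (1:F) + a + b ≠ 0 := fun h => hs1 (by linear_combination h - h2)
    have h1ab1 : (1:F) + a + b ≠ 1 := fun h => hs0 (by linear_combination h)
    simp only [zero_add] at heq0
    rw [hf' _ hs0 hs1, hf' _ ha0 ha1, hf' _ hb0 hb1, hf0] at heq0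
    rw [hf1, hf' _ h1ab0 h1ab1, hf' _ h1a0 h1a1, hf' _ h1b0 h1b1] at heq1
    field_simp at heq0 heq1
    have E0 : a^2 + a*b + b^2 = a^2*b + a*b^2 := by
      linear_combination heq0 - (a*b + a*b^2 + a^2*b) * h2
    have E1 : a^2 + a*b + b^2 = 1 := by
      linear_combination heq1 - (2 + 2*a + a*b + 2*b) * h2
    exact hroot7 (a+b) (by linear_combination (a+b+1)*E1 - E0 + (a+b+1)*h2)
  have card4 : ∀ y1 y2 y3 y4 : F, ({y1,y2,y3,y4} : Finset F).card ≤ 4 := by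
    intro y1 y2 y3 y4
    have c1 := Finset.card_insert_le y1 ({y2,y3,y4} : Finset F)
    have c2 := Finset.card_insert_le y2 ({y3,y4} : Finset F)
    have c3 := Finset.card_insert_le y3 ({y4} : Finset F)
    have c4 : ({y4} : Finset F).card = 1 := Finset.card_singleton y4
    omega
  constructor
  · -- upper bound
    intro a b hab
    have ha0 : a ≠ 0 := fun h => hab (by rw [h]; ring)
    have hb0 : b ≠ 0 := fun h => hab (by rw [h]; ring)
    have hs0 : a + b ≠ 0 := fun h => hab (by rw [h, mul_zero])
    set S := Finset.univ.filter (fun x : F => f (x+a+b) + f (x+a) + f (x+b) + f x = 0) with hS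
    have hmem : ∀ x : F, x ∈ S ↔ f (x+a+b) + f (x+a) + f (x+b) + f x = 0 := by
      intro x; simp [hS]
    have hsub : ∀ x : F, x ∈ S →
        x = 0 ∨ x = a ∨ x = b ∨ x = a+b ∨ x = 1 ∨ x = 1+a ∨ x = 1+b ∨ x = 1+a+b := by
      intro x hx
      by_contra hc
      push_neg at hc
      obtain ⟨c1,c2,c3,c4,c5,c6,c7,c8⟩ := hc
      have hxa0 : x + a ≠ 0 := fun h => c2 (hcv _ _ h)
      have hxa1 : x + a ≠ 1 := fun h => c6 (hcv1 _ _ h)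
      have hxb0 : x + b ≠ 0 := fun h => c3 (hcv _ _ h)
      have hxb1 : x + b ≠ 1 := fun h => c7 (hcv1 _ _ h)
      have hxab0 : x + a + b ≠ 0 := fun h => c4 (by linear_combination h - (a+b)*h2)
      have hxab1 : x + a + b ≠ 1 := fun h => c8 (by linear_combination h - (a+b)*h2)
      exact hab (key a b x c1 c5 hxa0 hxa1 hxb0 hxb1 hxab0 hxab1 ((hmem x).mp hx))
    have hT0 : ∀ x : F, x ∈ S → (x = 0 ∨ x = a ∨ x = b ∨ x = a + b) → (0:F) ∈ S := by
      intro x hx hcases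
      rcases hcases with h | h | h | h <;> rw [h] at hx
      · exact hx
      · have h1 := hstepa a b a ((hmem a).mp hx)
        rw [show a + a = (0:F) from by linear_combination a*h2] at h1
        exact (hmem 0).mpr h1
      · have h1 := hstepb a b b ((hmem b).mp hx)
        rw [show b + b = (0:F) from by linear_combination b*h2] at h1
        exact (hmem 0).mpr h1
      · have h1 := hstepa a b (a+b) ((hmem (a+b)).mp hx)
        rw [show a + b + a = b from by linear_combination a*h2] at h1
        have h2' := hstepb a b b h1
        rw [show b + b = (0:F) from by linear_combination b*h2] at h2'
        exact (hmem 0).mpr h2'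
    have hT1 : ∀ x : F, x ∈ S → (x = 1 ∨ x = 1+a ∨ x = 1+b ∨ x = 1+a+b) → (1:F) ∈ S := by
      intro x hx hcases
      rcases hcases with h | h | h | h <;> rw [h] at hx
      · exact hx
      · have h1 := hstepa a b (1+a) ((hmem (1+a)).mp hx)
        rw [show (1:F) + a + a = 1 from by linear_combination a*h2] at h1
        exact (hmem 1).mpr h1
      · have h1 := hstepb a b (1+b) ((hmem (1+b)).mp hx)
        rw [show (1:F) + b + b = 1 from by linear_combination b*h2] at h1
        exact (hmem 1).mpr h1
      · have h1 := hstepa a b (1+a+b) ((hmem (1+a+b)).mp hx)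
        rw [show (1:F) + a + b + a = 1 + b from by linear_combination a*h2] at h1
        have h2' := hstepb a b (1+b) h1
        rw [show (1:F) + b + b = 1 from by linear_combination b*h2] at h2'
        exact (hmem 1).mpr h2'
    by_cases h0S : (0:F) ∈ S
    · by_cases h1S : (1:F) ∈ S
      · -- both orbits solve
        by_cases hA1 : a = 1
        · subst hA1
          refine le_trans (Finset.card_le_card ?_) (card4 0 1 b (1+b))
          intro x hx
          simp only [Finset.mem_insert, Finset.mem_singleton]
          rcases hsub x hx with h | h | h | h | h | h | h | h
          · exact Or.inl h
          · exact Or.inr (Or.inl h)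
          · exact Or.inr (Or.inr (Or.inl h))
          · exact Or.inr (Or.inr (Or.inr h))
          · exact Or.inr (Or.inl h)
          · exact Or.inl (by rw [h]; linear_combination h2)
          · exact Or.inr (Or.inr (Or.inr h))
          · exact Or.inr (Or.inr (Or.inl (by rw [h]; linear_combination h2)))
        · by_cases hB1 : b = 1
          · subst hB1
            refine le_trans (Finset.card_le_card ?_) (card4 0 1 a (a+1))
            intro x hx
            simp only [Finset.mem_insert, Finset.mem_singleton]
            rcases hsub x hx with h | h | h | h | h | h | h | h
            · exact Or.inl h
            · exact Or.inr (Or.inr (Or.inl h))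
            · exact Or.inr (Or.inl h)
            · exact Or.inr (Or.inr (Or.inr h))
            · exact Or.inr (Or.inl h)
            · exact Or.inr (Or.inr (Or.inr (by rw [h]; ring)))
            · exact Or.inl (by rw [h]; linear_combination h2)
            · exact Or.inr (Or.inr (Or.inl (by rw [h]; linear_combination h2)))
          · by_cases hAB1 : a + b = 1
            · refine le_trans (Finset.card_le_card ?_) (card4 0 a b (a+b))
              intro x hx
              simp only [Finset.mem_insert, Finset.mem_singleton]
              rcases hsub x hx with h | h | h | h | h | h | h | h
              · exact Or.inl h
              · exact Or.inr (Or.inl h)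
              · exact Or.inr (Or.inr (Or.inl h))
              · exact Or.inr (Or.inr (Or.inr h))
              · exact Or.inr (Or.inr (Or.inr (by rw [h]; exact hAB1.symm)))
              · exact Or.inr (Or.inr (Or.inl (by rw [h]; linear_combination -hAB1 + a*h2)))
              · exact Or.inr (Or.inl (by rw [h]; linear_combination -hAB1 + b*h2))
              · exact Or.inl (by rw [h]; linear_combination hAB1 + h2)
            · exact absurd ((hmem 1).mp h1S)
                (fun h => hcontra a b ha0 hA1 hb0 hB1 hs0 hAB1 ((hmem 0).mp h0S) h)
      · -- 1 ∉ S (0 ∈ S case)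
        refine le_trans (Finset.card_le_card ?_) (card4 0 a b (a+b))
        intro x hx
        simp only [Finset.mem_insert, Finset.mem_singleton]
        rcases hsub x hx with h | h | h | h | h | h | h | h
        · exact Or.inl h
        · exact Or.inr (Or.inl h)
        · exact Or.inr (Or.inr (Or.inl h))
        · exact Or.inr (Or.inr (Or.inr h))
        · exact absurd (hT1 x hx (Or.inl h)) h1S
        · exact absurd (hT1 x hx (Or.inr (Or.inl h))) h1S
        · exact absurd (hT1 x hx (Or.inr (Or.inr (Or.inl h)))) h1S
        · exact absurd (hT1 x hx (Or.inr (Or.inr (Or.inr h)))) h1S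
    · -- 0 ∉ S
      refine le_trans (Finset.card_le_card ?_) (card4 1 (1+a) (1+b) (1+a+b))
      intro x hx
      simp only [Finset.mem_insert, Finset.mem_singleton]
      rcases hsub x hx with h | h | h | h | h | h | h | h
      · exact absurd (hT0 x hx (Or.inl h)) h0S
      · exact absurd (hT0 x hx (Or.inr (Or.inl h))) h0S
      · exact absurd (hT0 x hx (Or.inr (Or.inr (Or.inl h)))) h0S
      · exact absurd (hT0 x hx (Or.inr (Or.inr (Or.inr h)))) h0S
      · exact Or.inl h
      · exact Or.inr (Or.inl h)
      · exact Or.inr (Or.inr (Or.inl h))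
      · exact Or.inr (Or.inr (Or.inr h))
  · -- existence
    have main2 : ∀ a b : F, a ≠ 0 → a ≠ 1 → b ≠ 0 → b ≠ 1 → a+b ≠ 0 → a+b ≠ 1 →
        a^2 + a*b + b^2 = 1 →
        (Finset.univ.filter fun x : F =>
          f (x + a + b) + f (x + a) + f (x + b) + f x = 0).card = 4 := by
      intro a b ha0 ha1 hb0 hb1 hs0 hs1 E1
      have h1a0 : (1:F) + a ≠ 0 := fun h => ha1 (hcv _ _ h).symm
      have h1a1 : (1:F) + a ≠ 1 := fun h => ha0 (by linear_combination h)
      have h1b0 : (1:F) + b ≠ 0 := fun h => hb1 (hcv _ _ h).symm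
      have h1b1 : (1:F) + b ≠ 1 := fun h => hb0 (by linear_combination h)
      have h1ab0 : (1:F) + a + b ≠ 0 := fun h => hs1 (by linear_combination h - h2)
      have h1ab1 : (1:F) + a + b ≠ 1 := fun h => hs0 (by linear_combination h)
      have heq1 : f (1+a+b) + f (1+a) + f (1+b) + f 1 = 0 := by
        rw [hf1, hf' _ h1ab0 h1ab1, hf' _ h1a0 h1a1, hf' _ h1b0 h1b1, add_zero]
        field_simp
        linear_combination E1 + (2 + 2*a + a*b + 2*b) * h2
      have hiff : ∀ x : F, (f (x + a + b) + f (x + a) + f (x + b) + f x = 0) ↔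
          (x = 1 ∨ x = 1+a ∨ x = 1+b ∨ x = 1+a+b) := by
        intro x
        constructor
        · intro hx
          by_contra hc
          push_neg at hc
          obtain ⟨c5,c6,c7,c8⟩ := hc
          by_cases hx0 : x = 0
          · rw [hx0] at hx
            exact hcontra a b ha0 ha1 hb0 hb1 hs0 hs1 hx heq1
          by_cases hxa : x = a
          · rw [hxa] at hx
            have h1 := hstepa a b a hx
            rw [show a + a = (0:F) from by linear_combination a*h2] at h1
            exact hcontra a b ha0 ha1 hb0 hb1 hs0 hs1 h1 heq1
          by_cases hxb : x = b
          · rw [hxb] at hx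
            have h1 := hstepb a b b hx
            rw [show b + b = (0:F) from by linear_combination b*h2] at h1
            exact hcontra a b ha0 ha1 hb0 hb1 hs0 hs1 h1 heq1
          by_cases hxab : x = a + b
          · rw [hxab] at hx
            have h1 := hstepa a b (a+b) hx
            rw [show a + b + a = b from by linear_combination a*h2] at h1
            have h2' := hstepb a b b h1
            rw [show b + b = (0:F) from by linear_combination b*h2] at h2'
            exact hcontra a b ha0 ha1 hb0 hb1 hs0 hs1 h2' heq1
          have hxa0 : x + a ≠ 0 := fun h => hxa (hcv _ _ h)
          have hxa1 : x + a ≠ 1 := fun h => c6 (hcv1 _ _ h)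
          have hxb0 : x + b ≠ 0 := fun h => hxb (hcv _ _ h)
          have hxb1 : x + b ≠ 1 := fun h => c7 (hcv1 _ _ h)
          have hxab0 : x + a + b ≠ 0 := fun h => hxab (by linear_combination h - (a+b)*h2)
          have hxab1 : x + a + b ≠ 1 := fun h => c8 (by linear_combination h - (a+b)*h2)
          exact (mul_ne_zero (mul_ne_zero ha0 hb0) hs0)
            (key a b x hx0 c5 hxa0 hxa1 hxb0 hxb1 hxab0 hxab1 hx)
        · rintro (rfl | rfl | rfl | rfl)
          · exact heq1
          · exact hstepa a b 1 heq1
          · exact hstepb a b 1 heq1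
          · exact hstepb a b (1+a) (hstepa a b 1 heq1)
      have hanb : a ≠ b := fun h => hs0 (by linear_combination h + b*h2)
      have hfilter : (Finset.univ.filter fun x : F =>
          f (x + a + b) + f (x + a) + f (x + b) + f x = 0)
          = ({1, 1+a, 1+b, 1+a+b} : Finset F) := by
        ext x
        simp only [Finset.mem_filter, Finset.mem_univ, true_and, Finset.mem_insert,
          Finset.mem_singleton]
        exact hiff x
      rw [hfilter]
      have ne1 : (1:F) ≠ 1+a := fun h => ha0 (by linear_combination -h)
      have ne2 : (1:F) ≠ 1+b := fun h => hb0 (by linear_combination -h)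
      have ne3 : (1:F) ≠ 1+a+b := fun h => hs0 (by linear_combination -h)
      have ne4 : (1:F)+a ≠ 1+b := fun h => hanb (by linear_combination h)
      have ne5 : (1:F)+a ≠ 1+a+b := fun h => hb0 (by linear_combination -h)
      have ne6 : (1:F)+b ≠ 1+a+b := fun h => ha0 (by linear_combination -h)
      have nm1 : (1:F) ∉ ({1+a, 1+b, 1+a+b} : Finset F) := by
        simp only [Finset.mem_insert, Finset.mem_singleton]
        push_neg
        exact ⟨ne1, ne2, ne3⟩
      have nm2 : (1:F)+a ∉ ({1+b, 1+a+b} : Finset F) := by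
        simp only [Finset.mem_insert, Finset.mem_singleton]
        push_neg
        exact ⟨ne4, ne5⟩
      have nm3 : (1:F)+b ∉ ({1+a+b} : Finset F) := by
        simp only [Finset.mem_singleton]
        exact ne6
      rw [Finset.card_insert_of_notMem nm1, Finset.card_insert_of_notMem nm2,
        Finset.card_insert_of_notMem nm3, Finset.card_singleton]
    obtain ⟨m, hm0, hm1⟩ : ∃ m : F, m ≠ 0 ∧ m ≠ 1 := by
      by_contra hcon
      push_neg at hcon
      have hsub2 : (Finset.univ : Finset F) ⊆ {0,1} := by
        intro x _
        simp only [Finset.mem_insert, Finset.mem_singleton]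
        by_cases hx : x = 0
        · exact Or.inl hx
        · exact Or.inr (hcon x hx)
      have hle := Finset.card_le_card hsub2
      have hc2 : ({0,1} : Finset F).card ≤ 2 := by
        refine le_trans (Finset.card_insert_le _ _) ?_
        simp
      rw [Finset.card_univ] at hle
      omega
    have hd : m^2 + m + 1 ≠ 0 := hroot3 m
    set t : F := (m+1) * (m^2+m+1)⁻¹ with htdef
    have ht : t * (m^2+m+1) = m + 1 := by rw [htdef, mul_assoc, inv_mul_cancel₀ hd, mul_one]
    have ht0 : t ≠ 0 := fun h => hm1 (by linear_combination (m^2+m+1)*h - ht - h2)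
    have ha0 : (1:F) + t*m ≠ 0 := fun h =>
      one_ne_zero (show (1:F) = 0 by linear_combination (m^2+m+1)*h - m*ht - (m^2+m)*h2)
    have hb0 : (1:F) + t ≠ 0 := fun h =>
      hm0 ((pow_eq_zero_iff (two_ne_zero)).mp
        (show m^2 = 0 by linear_combination (m^2+m+1)*h - ht - (m+1)*h2))
    have ha1 : (1:F) + t*m ≠ 1 := by
      intro h
      have htm : t*m = 0 := by linear_combination h
      rcases mul_eq_zero.mp htm with h' | h'
      · exact ht0 h'
      · exact hm0 h'
    have hb1 : (1:F) + t ≠ 1 := fun h => ht0 (by linear_combination h)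
    have hs0 : (1 + t*m) + (1 + t) ≠ 0 := by
      intro h
      have h' : t*(m+1) = 0 := by linear_combination h - h2
      rcases mul_eq_zero.mp h' with h'' | h''
      · exact ht0 h''
      · exact hm1 (by linear_combination h'' - h2)
    have hs1 : (1 + t*m) + (1 + t) ≠ 1 := fun h =>
      hm0 (by linear_combination (m^2+m+1)*h - (m+1)*ht - (m^2+m+1)*h2)
    have E1 : (1 + t*m)^2 + (1 + t*m)*(1 + t) + (1 + t)^2 = 1 := by
      linear_combination t*ht + (1 + 2*t + 2*t*m)*h2
    exact ⟨1 + t*m, 1 + t, mul_ne_zero (mul_ne_zero ha0 hb0) hs0,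
      main2 _ _ ha0 ha1 hb0 hb1 hs0 hs1 E1⟩
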